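/- Characterization of mutual/common knowledge of a fact (telling setting): For any word w over N whose set of letters [w] has at least two distinct players, any atom p ∈ At, and any state (V,M), the following are equivalent: (i) (V,M) ⊨ K_w p (iterated knowledge along w); (ii) some message (·,A,p) ∈ M satisfies [w] ⊆ A; (iii) (V,M) ⊨ C_{[w]} p. -/

import Mathlib

structure Msg (P A : Type) where
  sender : P
  grp : Set P
  fact : A

inductive Form (P A : Type) where
  | atom : A → Form P A
  | neg  : Form P A → Form P A
  | and  : Form P A → Form P A → Form P A
  | or   : Form P A → Form P A → Form P A
  | ck   : Set P → Form P A → Form P A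

/-- The negation-free (positive) fragment L⁺. -/
def Positive {P A : Type} : Form P A → Prop
  | .atom _ => True
  | .neg _ => False
  | .and φ ψ => Positive φ ∧ Positive ψ
  | .or φ ψ => Positive φ ∧ Positive ψ
  | .ck _ φ => Positive φ

/-- Atoms occurring in a formula. -/
def FactsF {P A : Type} : Form P A → Set A
  | .atom p => {p}
  | .neg φ => FactsF φ
  | .and φ ψ => FactsF φ ∪ FactsF ψ
  | .or φ ψ => FactsF φ ∪ FactsF ψ
  | .ck _ φ => FactsF φ

/-- Facts occurring in a set of messages. -/
def Facts {P A : Type} (M : Set (Msg P A)) : Set A := {p | ∃ m ∈ M, m.fact = p}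

/-- A state in the telling setting: messages (i,A,p) with i ∈ A, p ∈ At_i
    (ownership given by `owner`), and Facts(M) ⊆ V. -/
def TState {P A : Type} (owner : A → P) (V : Set A) (M : Set (Msg P A)) : Prop :=
  ∀ m ∈ M, m.sender ∈ m.grp ∧ owner m.fact = m.sender ∧ m.fact ∈ V

/-- All messages are H-compliant. -/
def HComp {P A : Type} (H : Set (Set P)) (M : Set (Msg P A)) : Prop :=
  ∀ m ∈ M, m.grp ∈ H

/-- Indistinguishability for player i: equality of (V_i, M_i). -/
def indist {P A : Type} (owner : A → P) (i : P)
    (s t : Set A × Set (Msg P A)) : Prop :=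
  {p ∈ s.1 | owner p = i} = {p ∈ t.1 | owner p = i} ∧
  {m ∈ s.2 | i ∈ m.grp} = {m ∈ t.2 | i ∈ m.grp}

/-- ∼_G: transitive closure of the union of the ∼_i, i ∈ G. -/
def reach {P A : Type} (owner : A → P) (G : Set P) :
    Set A × Set (Msg P A) → Set A × Set (Msg P A) → Prop :=
  Relation.TransGen (fun s t => ∃ i ∈ G, indist owner i s t)

/-- Semantics ⊨_H (telling setting): C_G quantifies over H-compliant telling states. -/
def sat {P A : Type} (owner : A → P) (H : Set (Set P)) :
    Form P A → Set A → Set (Msg P A) → Prop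
  | .atom p, V, _ => p ∈ V
  | .neg φ, V, M => ¬ sat owner H φ V M
  | .and φ ψ, V, M => sat owner H φ V M ∧ sat owner H ψ V M
  | .or φ ψ, V, M => sat owner H φ V M ∨ sat owner H ψ V M
  | .ck G φ, V, M => ∀ V' M', TState owner V' M' → HComp H M' →
      reach owner G (V, M) (V', M') → sat owner H φ V' M'

/-- The complete hypergraph: all nonempty subsets of players. -/
def completeH (P : Type) : Set (Set P) := {B | B.Nonempty}

/-- Iterated knowledge K_{i₁}…K_{i_k} φ along a word. -/
def Kw {P A : Type} (w : List P) (φ : Form P A) : Form P A :=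
  w.foldr (fun i ψ => Form.ck {i} ψ) φ

/-- Restriction of a state to player i's view (minimal ∼_i-equivalent state). -/
def resSt {P A : Type} (owner : A → P) (i : P) (s : Set A × Set (Msg P A)) :
    Set A × Set (Msg P A) :=
  ({q ∈ s.1 | owner q = i} ∪ Facts {m ∈ s.2 | i ∈ m.grp},
   {m ∈ s.2 | i ∈ m.grp})

/-- Iterated restrictions along a word. -/
def chainSt {P A : Type} (owner : A → P) :
    List P → Set A × Set (Msg P A) → Set A × Set (Msg P A)
  | [], s => s
  | i :: l, s => chainSt owner l (resSt owner i s)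

lemma tstate_hcomp {P A : Type} {owner : A → P} {V : Set A} {M : Set (Msg P A)}
    (h : TState owner V M) : HComp (completeH P) M :=
  fun m hm => ⟨m.sender, (h m hm).1⟩

lemma resSt_tstate {P A : Type} {owner : A → P} {s : Set A × Set (Msg P A)}
    (h : TState owner s.1 s.2) (i : P) :
    TState owner (resSt owner i s).1 (resSt owner i s).2 := by
  rintro m ⟨hmM, hig⟩
  obtain ⟨h1, h2, _⟩ := h m hmM
  exact ⟨h1, h2, Or.inr ⟨m, ⟨hmM, hig⟩, rfl⟩⟩

lemma resSt_indist {P A : Type} {owner : A → P} {s : Set A × Set (Msg P A)}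
    (h : TState owner s.1 s.2) (i : P) :
    indist owner i s (resSt owner i s) := by
  constructor
  · ext q
    simp only [resSt, Set.mem_setOf_eq, Set.mem_union, Facts]
    constructor
    · rintro ⟨hq, ho⟩; exact ⟨Or.inl ⟨hq, ho⟩, ho⟩
    · rintro ⟨hq | ⟨m, ⟨hmM, _⟩, hfact⟩, ho⟩
      · exact ⟨hq.1, ho⟩
      · exact ⟨hfact ▸ (h m hmM).2.2, ho⟩
  · ext m
    simp only [resSt, Set.mem_setOf_eq]
    tauto

lemma chainSt_tstate {P A : Type} {owner : A → P} :
    ∀ (l : List P) (s : Set A × Set (Msg P A)), TState owner s.1 s.2 →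
      TState owner (chainSt owner l s).1 (chainSt owner l s).2
  | [], _, h => h
  | i :: l, s, h => chainSt_tstate l (resSt owner i s) (resSt_tstate h i)

lemma chainSt_reach {P A : Type} {owner : A → P} {G : Set P} :
    ∀ (l : List P) (s : Set A × Set (Msg P A)), l ≠ [] → (∀ i ∈ l, i ∈ G) →
      TState owner s.1 s.2 → reach owner G s (chainSt owner l s)
  | [], _, hne, _, _ => absurd rfl hne
  | [i], s, _, hG, h =>
      Relation.TransGen.single ⟨i, hG i (by simp), resSt_indist h i⟩
  | i :: j :: l, s, _, hG, h => by
      refine Relation.TransGen.head ⟨i, hG i (by simp), resSt_indist h i⟩ ?_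
      exact chainSt_reach (j :: l) (resSt owner i s) (by simp)
        (fun k hk => hG k (List.mem_cons_of_mem i hk)) (resSt_tstate h i)

/-- Survival lemma: if p survives all restrictions along l, then either p is owned
    by every letter of l, or some message of the original state tells p to a group
    containing all letters of l. -/
lemma chainSt_survive {P A : Type} {owner : A → P} {p : A} :
    ∀ (l : List P) (s : Set A × Set (Msg P A)), TState owner s.1 s.2 →
      p ∈ (chainSt owner l s).1 →
      p ∈ s.1 ∧ ((∀ i ∈ l, owner p = i) ∨
        ∃ m ∈ s.2, m.fact = p ∧ ∀ i ∈ l, i ∈ m.grp)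
  | [], _, _, hp => ⟨hp, Or.inl (by simp)⟩
  | i :: l, s, h, hp => by
      obtain ⟨hp1, hdisj⟩ :=
        chainSt_survive l (resSt owner i s) (resSt_tstate h i) hp
      have hpV : p ∈ s.1 := by
        rcases hp1 with ⟨hq, _⟩ | ⟨m, ⟨hmM, _⟩, hfact⟩
        · exact hq
        · exact hfact ▸ (h m hmM).2.2
      refine ⟨hpV, ?_⟩
      rcases hdisj with hown | ⟨m, ⟨hmM, hig⟩, hfact, hall⟩
      · rcases hp1 with ⟨_, ho⟩ | ⟨m, ⟨hmM, hig⟩, hfact⟩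
        · left
          intro k hk
          rcases List.mem_cons.mp hk with rfl | hk
          · exact ho
          · exact hown k hk
        · right
          refine ⟨m, hmM, hfact, fun k hk => ?_⟩
          rcases List.mem_cons.mp hk with rfl | hk
          · exact hig
          · have hk' : m.sender = k := by
              rw [← (h m hmM).2.1, hfact, hown k hk]
            exact hk' ▸ (h m hmM).1
      · right
        refine ⟨m, hmM, hfact, fun k hk => ?_⟩
        rcases List.mem_cons.mp hk with rfl | hk
        · exact hig
        · exact hall k hk

/-- Persistence: a message whose group contains G survives any ∼_G chain. -/
lemma persist {P A : Type} {owner : A → P} {G : Set P}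
    {s t : Set A × Set (Msg P A)} (hr : reach owner G s t)
    {m : Msg P A} (hm : m ∈ s.2) (hG : G ⊆ m.grp) : m ∈ t.2 := by
  induction hr with
  | single h =>
      obtain ⟨i, hiG, _, h2⟩ := h
      have : m ∈ {m' ∈ s.2 | i ∈ m'.grp} := ⟨hm, hG hiG⟩
      rw [h2] at this
      exact this.1
  | tail _ h ih =>
      obtain ⟨i, hiG, _, h2⟩ := h
      have : m ∈ {m' ∈ _ | i ∈ m'.grp} := ⟨ih, hG hiG⟩
      rw [h2] at this
      exact this.1

/-- (ii) ⇒ (i): a message told to a group containing all of w yields K_w p. -/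
lemma kw_of_msg {P A : Type} {owner : A → P} {p : A} :
    ∀ (l : List P) (V : Set A) (M : Set (Msg P A)), TState owner V M →
      (∃ m ∈ M, (∀ i ∈ l, i ∈ m.grp) ∧ m.fact = p) →
      sat owner (completeH P) (Kw l (.atom p)) V M := by
  intro l
  induction l with
  | nil =>
      rintro V M hT ⟨m, hmM, _, hfact⟩
      show p ∈ V
      exact hfact ▸ (hT m hmM).2.2
  | cons a l ih =>
      rintro V M _ ⟨m, hmM, hall, hfact⟩
      intro V' M' hT' _ hr
      have hmM' : m ∈ M' := persist hr hmM (by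
        intro x hx
        rw [Set.mem_singleton_iff] at hx
        exact hx ▸ hall a (List.mem_cons_self (a := a) (l := l)))
      exact ih V' M' hT'
        ⟨m, hmM', fun k hk => hall k (List.mem_cons_of_mem a hk), hfact⟩

/-- (i) ⇒ p survives the chain of restrictions. -/
lemma chain_of_kw {P A : Type} {owner : A → P} {p : A} :
    ∀ (l : List P) (V : Set A) (M : Set (Msg P A)), TState owner V M →
      sat owner (completeH P) (Kw l (.atom p)) V M →
      p ∈ (chainSt owner l (V, M)).1
  | [], V, M, _, hsat => hsat
  | i :: l, V, M, hT, hsat => by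
      have hT' : TState owner (resSt owner i (V, M)).1 (resSt owner i (V, M)).2 :=
        resSt_tstate hT i
      have hsat' := hsat (resSt owner i (V, M)).1 (resSt owner i (V, M)).2 hT'
        (tstate_hcomp hT')
        (Relation.TransGen.single ⟨i, rfl, resSt_indist hT i⟩)
      exact chain_of_kw l _ _ hT' hsat'

theorem chain_fact_iff_msg_iff_ck {P A : Type} [Fintype P] (owner : A → P)
    (V : Set A) (M : Set (Msg P A)) (hS : TState owner V M)
    (w : List P) (hw : ∃ i ∈ w, ∃ j ∈ w, i ≠ j) (p : A) :
    (sat owner (completeH P) (Kw w (.atom p)) V M ↔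
        ∃ m ∈ M, {x | x ∈ w} ⊆ m.grp ∧ m.fact = p) ∧
    ((∃ m ∈ M, {x | x ∈ w} ⊆ m.grp ∧ m.fact = p) ↔
        sat owner (completeH P) (.ck {x | x ∈ w} (.atom p)) V M) := by
  obtain ⟨i, hi, j, hj, hij⟩ := hw
  have hwne : w ≠ [] := by rintro rfl; simp at hi
  have key : p ∈ (chainSt owner w (V, M)).1 →
      ∃ m ∈ M, {x | x ∈ w} ⊆ m.grp ∧ m.fact = p := by
    intro hp
    obtain ⟨_, hd⟩ := chainSt_survive w (V, M) hS hp
    rcases hd with hown | ⟨m, hmM, hfact, hall⟩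
    · exact absurd ((hown i hi).symm.trans (hown j hj)) hij
    · exact ⟨m, hmM, fun x hx => hall x hx, hfact⟩
  constructor
  · constructor
    · intro hsat
      exact key (chain_of_kw w V M hS hsat)
    · rintro ⟨m, hmM, hsub, hfact⟩
      exact kw_of_msg w V M hS ⟨m, hmM, fun k hk => hsub hk, hfact⟩
  · constructor
    · rintro ⟨m, hmM, hsub, hfact⟩ V' M' hT' _ hr
      have hmM' : m ∈ M' := persist hr hmM hsub
      exact hfact ▸ (hT' m hmM').2.2
    · intro hsat
      have hT' := chainSt_tstate w (V, M) hS
      have hp := hsat (chainSt owner w (V, M)).1 (chainSt owner w (V, M)).2 hT'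
        (tstate_hcomp hT') (by
          rw [Prod.mk.eta]
          exact chainSt_reach w (V, M) hwne (fun k hk => hk) hS)
      exact key hp
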